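/- Adopt the Grid setup. There is an absolute constant K₀ (independent of a, b, K, K', and the parameters) such that whenever K' ≥ K₀, for every j ∈ {1,…,K} and l ∈ {1,…,K'}, ∫_a^b |π_{jl}(x) − 1_{(a_{jl}, a_{j(l+1)}]}(x)| dx ≤ 2L/(5K') + L·K·exp(−K'/30) + L·exp(−2K'/3). -/

import Mathlib

open MeasureTheory

noncomputable section

/-- Width `L = (b-a)/K` of the coarse grid. -/
def gL (a b : ℝ) (K : ℕ) : ℝ := (b - a) / K

/-- Left endpoint `a_{jl} = a + (j-1)L + (l-1)L/K'` of the `(j,l)`-th subinterval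
(0-indexed: `j : Fin K`, `l : Fin K'`). -/
def gA (a b : ℝ) (K K' : ℕ) (j : Fin K) (l : Fin K') : ℝ :=
  a + (j : ℕ) * gL a b K + (l : ℕ) * gL a b K / K'

/-- Midpoint `c_{jl}` of the `(j,l)`-th subinterval. -/
def gC (a b : ℝ) (K K' : ℕ) (j : Fin K) (l : Fin K') : ℝ :=
  gA a b K K' j l + gL a b K / (2 * K')

/-- The Gaussian softmax weight `π_{jl}(x)`. -/
def gPi (a b : ℝ) (K K' : ℕ) (μ : Fin K → Fin K' → ℝ) (σ2 : ℝ)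
    (j : Fin K) (l : Fin K') (x : ℝ) : ℝ :=
  Real.exp (-(x - μ j l) ^ 2 / (2 * σ2)) /
    ∑ t : Fin K, ∑ s : Fin K', Real.exp (-(x - μ t s) ^ 2 / (2 * σ2))

end

lemma sum_grid (K K' : ℕ) (F : ℕ → ℝ) :
    ∑ t : Fin K, ∑ s : Fin K', F ((t : ℕ) * K' + (s : ℕ)) = ∑ i ∈ Finset.range (K * K'), F i := by
  induction K with
  | zero => simp
  | succ K ih =>
    rw [Fin.sum_univ_castSucc]
    have hKK : (K + 1) * K' = K * K' + K' := by ring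
    rw [hKK, Finset.sum_range_add]
    simp only [Fin.coe_castSucc, Fin.val_last]
    rw [ih, Fin.sum_univ_eq_sum_range (fun s => F (K * K' + s)) K']

lemma intExpA (Δ σ2 q c d : ℝ) (hΔ : 0 < Δ) (hσ : 0 < σ2) (hcd : c ≤ d) :
    (∫ x in Set.Ioc c d, min 1 (Real.exp (Δ * (x - q) / σ2))) ≤ max 0 (d - q) + σ2 / Δ := by
  have hcontE : Continuous fun x : ℝ => Real.exp (Δ * (x - q) / σ2) :=
    ((continuous_const.mul (continuous_id.sub continuous_const)).div_const σ2).rexp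
  have hcont : Continuous fun x : ℝ => min 1 (Real.exp (Δ * (x - q) / σ2)) :=
    continuous_const.min hcontE
  set m := max c (min d q) with hm
  have hcm : c ≤ m := le_max_left _ _
  have hmd : m ≤ d := max_le hcd (min_le_left _ _)
  have hF : ∀ x : ℝ, HasDerivAt (fun y => σ2 / Δ * Real.exp (Δ * (y - q) / σ2))
      (Real.exp (Δ * (x - q) / σ2)) x := by
    intro x
    have h1 : HasDerivAt (fun y : ℝ => Δ * (y - q) / σ2) (Δ / σ2) x := by
      simpa using (((hasDerivAt_id x).sub_const q).const_mul Δ).div_const σ2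
    have h2 := (h1.exp).const_mul (σ2 / Δ)
    refine h2.congr_deriv ?_
    field_simp
  rw [← intervalIntegral.integral_of_le hcd, ← intervalIntegral.integral_add_adjacent_intervals
    (b := m) (hcont.intervalIntegrable _ _) (hcont.intervalIntegrable _ _)]
  have hpart1 : (∫ x in c..m, min 1 (Real.exp (Δ * (x - q) / σ2))) ≤ σ2 / Δ := by
    have h1 : (∫ x in c..m, min 1 (Real.exp (Δ * (x - q) / σ2)))
        ≤ ∫ x in c..m, Real.exp (Δ * (x - q) / σ2) := by
      apply intervalIntegral.integral_mono_on hcm (hcont.intervalIntegrable _ _)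
        (hcontE.intervalIntegrable _ _)
      intro x _; exact min_le_right _ _
    have h2 : (∫ x in c..m, Real.exp (Δ * (x - q) / σ2))
        = σ2 / Δ * Real.exp (Δ * (m - q) / σ2) - σ2 / Δ * Real.exp (Δ * (c - q) / σ2) :=
      intervalIntegral.integral_eq_sub_of_hasDerivAt (fun x _ => hF x)
        (hcontE.intervalIntegrable _ _)
    rw [h2] at h1
    refine h1.trans ?_
    have hσΔ : 0 < σ2 / Δ := div_pos hσ hΔ
    rcases le_or_gt m q with hmq | hmq
    · have e1 : Real.exp (Δ * (m - q) / σ2) ≤ 1 := by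
        apply Real.exp_le_one_iff.2
        exact div_nonpos_of_nonpos_of_nonneg
          (mul_nonpos_of_nonneg_of_nonpos hΔ.le (by linarith)) hσ.le
      nlinarith [Real.exp_pos (Δ * (c - q) / σ2)]
    · have hmc : m = c := by
        rcases max_choice c (min d q) with h | h
        · rw [hm]; exact h
        · exfalso
          have h3 := min_le_right d q
          rw [hm, h] at hmq
          linarith
      rw [hmc]
      simp
      positivity
  have hpart2 : (∫ x in m..d, min 1 (Real.exp (Δ * (x - q) / σ2))) ≤ max 0 (d - q) := by
    have h1 : (∫ x in m..d, min 1 (Real.exp (Δ * (x - q) / σ2))) ≤ ∫ x in m..d, (1:ℝ) := by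
      apply intervalIntegral.integral_mono_on hmd (hcont.intervalIntegrable _ _)
        (intervalIntegrable_const)
      intro x _; exact min_le_left _ _
    rw [intervalIntegral.integral_const, smul_eq_mul, mul_one] at h1
    refine h1.trans ?_
    have hmin : min d q ≤ m := le_max_right _ _
    rcases le_total q d with hqd | hqd
    · have : min d q = q := min_eq_right hqd
      rw [this] at hmin
      have := le_max_right (0:ℝ) (d - q)
      linarith
    · have : min d q = d := min_eq_left hqd
      rw [this] at hmin
      have := le_max_left (0:ℝ) (d - q)
      linarith
  linarith

lemma intExpB (Δ σ2 q c d : ℝ) (hΔ : 0 < Δ) (hσ : 0 < σ2) (hcd : c ≤ d) :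
    (∫ x in Set.Ioc c d, min 1 (Real.exp (Δ * (q - x) / σ2))) ≤ max 0 (q - c) + σ2 / Δ := by
  have hcontE : Continuous fun x : ℝ => Real.exp (Δ * (q - x) / σ2) :=
    ((continuous_const.mul (continuous_const.sub continuous_id)).div_const σ2).rexp
  have hcont : Continuous fun x : ℝ => min 1 (Real.exp (Δ * (q - x) / σ2)) :=
    continuous_const.min hcontE
  set m := min d (max c q) with hm
  have hcm : c ≤ m := le_min hcd (le_max_left _ _)
  have hmd : m ≤ d := min_le_left _ _
  have hF : ∀ x : ℝ, HasDerivAt (fun y => -(σ2 / Δ) * Real.exp (Δ * (q - y) / σ2))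
      (Real.exp (Δ * (q - x) / σ2)) x := by
    intro x
    have h1 : HasDerivAt (fun y : ℝ => Δ * (q - y) / σ2) (-Δ / σ2) x := by
      have := (((hasDerivAt_id x).const_sub q).const_mul Δ).div_const σ2
      simpa using this
    have h2 := (h1.exp).const_mul (-(σ2 / Δ))
    refine h2.congr_deriv ?_
    field_simp
  rw [← intervalIntegral.integral_of_le hcd, ← intervalIntegral.integral_add_adjacent_intervals
    (b := m) (hcont.intervalIntegrable _ _) (hcont.intervalIntegrable _ _)]
  have hpart1 : (∫ x in c..m, min 1 (Real.exp (Δ * (q - x) / σ2))) ≤ max 0 (q - c) := by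
    have h1 : (∫ x in c..m, min 1 (Real.exp (Δ * (q - x) / σ2))) ≤ ∫ x in c..m, (1:ℝ) := by
      apply intervalIntegral.integral_mono_on hcm (hcont.intervalIntegrable _ _)
        (intervalIntegrable_const)
      intro x _; exact min_le_left _ _
    rw [intervalIntegral.integral_const, smul_eq_mul, mul_one] at h1
    refine h1.trans ?_
    have hmax : m ≤ max c q := min_le_right _ _
    rcases le_total c q with hcq | hcq
    · have : max c q = q := max_eq_right hcq
      rw [this] at hmax
      have := le_max_right (0:ℝ) (q - c)
      linarith
    · have : max c q = c := max_eq_left hcq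
      rw [this] at hmax
      have := le_max_left (0:ℝ) (q - c)
      linarith
  have hpart2 : (∫ x in m..d, min 1 (Real.exp (Δ * (q - x) / σ2))) ≤ σ2 / Δ := by
    have h1 : (∫ x in m..d, min 1 (Real.exp (Δ * (q - x) / σ2)))
        ≤ ∫ x in m..d, Real.exp (Δ * (q - x) / σ2) := by
      apply intervalIntegral.integral_mono_on hmd (hcont.intervalIntegrable _ _)
        (hcontE.intervalIntegrable _ _)
      intro x _; exact min_le_right _ _
    have h2 : (∫ x in m..d, Real.exp (Δ * (q - x) / σ2))
        = -(σ2 / Δ) * Real.exp (Δ * (q - d) / σ2) - -(σ2 / Δ) * Real.exp (Δ * (q - m) / σ2) :=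
      intervalIntegral.integral_eq_sub_of_hasDerivAt (fun x _ => hF x)
        (hcontE.intervalIntegrable _ _)
    rw [h2] at h1
    refine h1.trans ?_
    have hσΔ : 0 < σ2 / Δ := div_pos hσ hΔ
    rcases le_or_gt q m with hqm | hqm
    · have e1 : Real.exp (Δ * (q - m) / σ2) ≤ 1 := by
        apply Real.exp_le_one_iff.2
        exact div_nonpos_of_nonpos_of_nonneg
          (mul_nonpos_of_nonneg_of_nonpos hΔ.le (by linarith)) hσ.le
      nlinarith [Real.exp_pos (Δ * (q - d) / σ2)]
    · have hmc : m = d := by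
        rcases min_choice d (max c q) with h | h
        · rw [hm]; exact h
        · exfalso
          have h3 := le_max_right c q
          rw [hm, h] at hqm
          linarith
      rw [hmc]
      simp
      positivity
  linarith

set_option maxHeartbeats 1000000 in
theorem core (a h σ2 : ℝ) (M N i₀ : ℕ) (ν : ℕ → ℝ)
    (hh : 0 < h) (hσ : 0 < σ2) (hσM : (M:ℝ) * σ2 ≤ h^2) (hM : 90 ≤ M) (hi₀ : i₀ < N)
    (hν : ∀ i : ℕ, |ν i - (a + ((i:ℝ) + 1/2) * h)| ≤ h / 6) :
    (∫ x in Set.Ioc a (a + N * h),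
      |Real.exp (-(x - ν i₀) ^ 2 / (2*σ2)) /
          (∑ i ∈ Finset.range N, Real.exp (-(x - ν i) ^ 2 / (2*σ2)))
        - Set.indicator (Set.Ioc (a + i₀ * h) (a + i₀ * h + h)) (fun _ => (1:ℝ)) x|)
      ≤ 2*h/5 + N * h * Real.exp (-(M:ℝ)/30) := by
  classical
  have hM' : (90:ℝ) ≤ M := by exact_mod_cast hM
  have hMpos : (0:ℝ) < M := by linarith
  set E : ℕ → ℝ → ℝ := fun i x => Real.exp (-(x - ν i) ^ 2 / (2*σ2)) with hE
  set S : ℝ → ℝ := fun x => ∑ i ∈ Finset.range N, E i x with hS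
  set Ind : ℝ → ℝ := Set.indicator (Set.Ioc (a + i₀ * h) (a + i₀ * h + h)) (fun _ => (1:ℝ))
    with hInd
  set f : ℝ → ℝ := fun x => |E i₀ x / S x - Ind x| with hf
  have hEpos : ∀ i x, 0 < E i x := fun i x => Real.exp_pos _
  have hEcont : ∀ i, Continuous (E i) := by
    intro i
    exact ((continuous_neg.comp ((continuous_id.sub continuous_const).pow 2)).div_const
      (2*σ2)).rexp
  have hScont : Continuous S := continuous_finset_sum _ (fun i _ => hEcont i)
  have hSpos : ∀ x, 0 < S x :=
    fun x => Finset.sum_pos (fun i _ => hEpos i x) ⟨i₀, Finset.mem_range.2 hi₀⟩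
  have hES : ∀ x : ℝ, ∀ i ∈ Finset.range N, E i x ≤ S x := fun x i hi =>
    Finset.single_le_sum (fun k _ => (hEpos k x).le) hi
  have hπ0 : ∀ x, 0 ≤ E i₀ x / S x := fun x => (div_pos (hEpos _ _) (hSpos x)).le
  have hπ1 : ∀ x, E i₀ x / S x ≤ 1 :=
    fun x => (div_le_one (hSpos x)).2 (hES x i₀ (Finset.mem_range.2 hi₀))
  have hInd01 : ∀ x, Ind x = 0 ∨ Ind x = 1 := by
    intro x
    by_cases hx : x ∈ Set.Ioc (a + i₀ * h) (a + i₀ * h + h)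
    · right; rw [hInd]; exact Set.indicator_of_mem hx _
    · left; rw [hInd]; exact Set.indicator_of_notMem hx _
  have hfbd : ∀ x, ‖f x‖ ≤ 1 := by
    intro x
    rw [hf]
    simp only [Real.norm_eq_abs, abs_abs]
    rcases hInd01 x with hx | hx <;> rw [hx] <;>
      [skip; skip] <;> rw [abs_le] <;> constructor <;> first
      | linarith [hπ0 x, hπ1 x]
      | linarith [hπ0 x, hπ1 x]
  have hπcont : Continuous fun x => E i₀ x / S x :=
    (hEcont i₀).div hScont (fun x => (hSpos x).ne')
  have hfmeas : Measurable f := by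
    apply Measurable.abs
    exact (hπcont.measurable).sub (Measurable.indicator measurable_const measurableSet_Ioc)
  have hfint : ∀ c d : ℝ, IntegrableOn f (Set.Ioc c d) := by
    intro c d
    have h1 : IntegrableOn (fun _ : ℝ => (1:ℝ)) (Set.Ioc c d) :=
      integrableOn_const measure_Ioc_lt_top.ne
    exact Integrable.mono' h1 hfmeas.aestronglyMeasurable (ae_of_all _ hfbd)
  set e23 : ℝ := Real.exp (-(2*(M:ℝ))/3) with he23
  have he23pos : 0 < e23 := Real.exp_pos _
  -- geometry of centers
  have hνlo : ∀ i : ℕ, a + ((i:ℝ) + 1/2) * h - h/6 ≤ ν i := by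
    intro i; have := abs_le.1 (hν i); linarith [this.1]
  have hνhi : ∀ i : ℕ, ν i ≤ a + ((i:ℝ) + 1/2) * h + h/6 := by
    intro i; have := abs_le.1 (hν i); linarith [this.2]
  have hΔlo : ∀ k : ℕ, 2*h/3 ≤ ν (k+1) - ν k := by
    intro k
    have h1 := hνlo (k+1); have h2 := hνhi k
    push_cast at h1
    linarith
  have hΔpos : ∀ k : ℕ, 0 < ν (k+1) - ν k := fun k => lt_of_lt_of_le (by linarith) (hΔlo k)
  have hqbd : ∀ k : ℕ, |(ν k + ν (k+1))/2 - (a + ((k:ℝ)+1) * h)| ≤ h/6 := by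
    intro k
    have h1 := hνlo (k+1); have h2 := hνhi (k+1); have h3 := hνlo k; have h4 := hνhi k
    push_cast at h1 h2
    rw [abs_le]
    constructor <;> linarith
  -- far ratio bound
  have farRatio : ∀ (u v : ℕ) (x : ℝ), x ∈ Set.Ioc (a + (u:ℝ)*h) (a + (u:ℝ)*h + h) →
      (v + 2 ≤ u ∨ u + 2 ≤ v) → E v x / E u x ≤ e23 := by
    intro u v x hx hc
    have hx1 := hx.1
    have hx2 := hx.2
    simp only [hE, he23]
    rw [← Real.exp_sub]
    apply Real.exp_le_exp.2
    rw [div_sub_div_same, div_le_iff₀ (by positivity : (0:ℝ) < 2*σ2)]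
    have hu1 := hνlo u; have hu2 := hνhi u
    have hu : (x - ν u)^2 ≤ (2*h/3)^2 := by
      have b1 : x - ν u ≤ 2*h/3 := by linarith
      have b2 : -(2*h/3) ≤ x - ν u := by linarith
      linarith [mul_nonneg (by linarith : (0:ℝ) ≤ 2*h/3 - (x - ν u))
        (by linarith : (0:ℝ) ≤ 2*h/3 + (x - ν u))]
    have hv : (4*h/3)^2 ≤ (x - ν v)^2 := by
      rcases hc with hc | hc
      · have hcast : (v:ℝ) + 2 ≤ u := by exact_mod_cast hc
        have hv2 := hνhi v
        have hmul : (4:ℝ)/3*h ≤ ((u:ℝ)-(v:ℝ)-2/3)*h :=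
          mul_le_mul_of_nonneg_right (by linarith) hh.le
        have b : 4*h/3 ≤ x - ν v := by nlinarith [hmul, hx1, hv2]
        linarith [mul_nonneg (by linarith : (0:ℝ) ≤ x - ν v - 4*h/3)
          (by linarith : (0:ℝ) ≤ x - ν v + 4*h/3)]
      · have hcast : (u:ℝ) + 2 ≤ v := by exact_mod_cast hc
        have hv1 := hνlo v
        have hmul : (4:ℝ)/3*h ≤ ((v:ℝ)-(u:ℝ)-2/3)*h :=
          mul_le_mul_of_nonneg_right (by linarith) hh.le
        have b : 4*h/3 ≤ ν v - x := by nlinarith [hmul, hx2, hv1]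
        linarith [mul_nonneg (by linarith : (0:ℝ) ≤ ν v - x - 4*h/3)
          (by linarith : (0:ℝ) ≤ ν v - x + 4*h/3)]
    linarith [hσM, hσ, hu, hv]
  -- near-ratio identities
  have ratioPlus : ∀ (k : ℕ) (x : ℝ), E (k+1) x / E k x
      = Real.exp ((ν (k+1) - ν k) * (x - (ν k + ν (k+1))/2) / σ2) := by
    intro k x
    simp only [hE]
    rw [← Real.exp_sub]
    congr 1
    field_simp
    ring
  have ratioMinus : ∀ (k : ℕ) (x : ℝ), E k x / E (k+1) x
      = Real.exp ((ν (k+1) - ν k) * ((ν k + ν (k+1))/2 - x) / σ2) := by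
    intro k x
    simp only [hE]
    rw [← Real.exp_sub]
    congr 1
    field_simp
    ring
  -- boundary constants
  set p : ℝ := a + (i₀:ℝ) * h with hp
  set Tp : ℝ := max 0 ((p + h) - (ν i₀ + ν (i₀+1))/2) + σ2 / (ν (i₀+1) - ν i₀) with hTp
  set Sp : ℝ := max 0 ((ν i₀ + ν (i₀+1))/2 - (p + h)) + σ2 / (ν (i₀+1) - ν i₀) with hSp
  set Tm : ℝ := if i₀ = 0 then 0 else
    max 0 ((ν (i₀-1) + ν i₀)/2 - p) + σ2 / (ν i₀ - ν (i₀-1)) with hTm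
  set Sm : ℝ := if i₀ = 0 then 0 else
    max 0 (p - (ν (i₀-1) + ν i₀)/2) + σ2 / (ν i₀ - ν (i₀-1)) with hSm
  have hTp0 : 0 ≤ Tp :=
    add_nonneg (le_max_left _ _) (div_nonneg hσ.le (hΔpos i₀).le)
  have hSp0 : 0 ≤ Sp :=
    add_nonneg (le_max_left _ _) (div_nonneg hσ.le (hΔpos i₀).le)
  have hpred : i₀ ≠ 0 → ν i₀ - ν (i₀ - 1) = ν ((i₀-1)+1) - ν (i₀-1) := by
    intro h0
    have hk : (i₀ - 1) + 1 = i₀ := by omega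
    rw [hk]
  have hTm0 : 0 ≤ Tm := by
    rw [hTm]
    split_ifs with h0
    · exact le_refl 0
    · exact add_nonneg (le_max_left _ _)
        (div_nonneg hσ.le (by rw [hpred h0]; exact (hΔpos _).le))
  have hSm0 : 0 ≤ Sm := by
    rw [hSm]
    split_ifs with h0
    · exact le_refl 0
    · exact add_nonneg (le_max_left _ _)
        (div_nonneg hσ.le (by rw [hpred h0]; exact (hΔpos _).le))
  -- cell integral bounds
  have hvol : ∀ u : ℕ, (volume (Set.Ioc (a + (u:ℝ)*h) (a + (u:ℝ)*h + h))).toReal = h := by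
    intro u
    rw [Real.volume_Ioc, add_sub_cancel_left, ENNReal.toReal_ofReal hh.le]
  have hmincont : ∀ u v : ℕ, Continuous fun x => min 1 (E v x / E u x) := fun u v =>
    continuous_const.min ((hEcont v).div (hEcont u) (fun x => (hEpos u x).ne'))
  have cellFar : ∀ u v : ℕ, (v + 2 ≤ u ∨ u + 2 ≤ v) →
      (∫ x in Set.Ioc (a + (u:ℝ)*h) (a + (u:ℝ)*h + h), min 1 (E v x / E u x)) ≤ h * e23 := by
    intro u v hc
    have h1 : (∫ x in Set.Ioc (a + (u:ℝ)*h) (a + (u:ℝ)*h + h), min 1 (E v x / E u x))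
        ≤ ∫ _x in Set.Ioc (a + (u:ℝ)*h) (a + (u:ℝ)*h + h), e23 := by
      apply setIntegral_mono_on ((hmincont u v).integrableOn_Ioc)
        (integrableOn_const measure_Ioc_lt_top.ne) measurableSet_Ioc
      intro x hx
      exact (min_le_right _ _).trans (farRatio u v x hx hc)
    rw [setIntegral_const, measureReal_def, hvol u, smul_eq_mul] at h1
    exact h1
  have cellPlusIn : (∫ x in Set.Ioc (a + (i₀:ℝ)*h) (a + (i₀:ℝ)*h + h),
      min 1 (E (i₀+1) x / E i₀ x)) ≤ Tp := by
    simp only [ratioPlus]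
    have := intExpA (ν (i₀+1) - ν i₀) σ2 ((ν i₀ + ν (i₀+1))/2)
      (a + (i₀:ℝ)*h) (a + (i₀:ℝ)*h + h) (hΔpos i₀) hσ (by linarith)
    rw [hTp, hp]
    exact this
  have cellPlusOut : (∫ x in Set.Ioc (a + ((i₀+1:ℕ):ℝ)*h) (a + ((i₀+1:ℕ):ℝ)*h + h),
      min 1 (E i₀ x / E (i₀+1) x)) ≤ Sp := by
    simp only [ratioMinus]
    have hc : a + ((i₀+1:ℕ):ℝ)*h = (a + (i₀:ℝ)*h) + h := by push_cast; ring
    rw [hc]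
    have := intExpB (ν (i₀+1) - ν i₀) σ2 ((ν i₀ + ν (i₀+1))/2)
      ((a + (i₀:ℝ)*h) + h) ((a + (i₀:ℝ)*h) + h + h) (hΔpos i₀) hσ (by linarith)
    rw [hSp, hp]
    exact this
  have cellMinusIn : i₀ ≠ 0 → (∫ x in Set.Ioc (a + (i₀:ℝ)*h) (a + (i₀:ℝ)*h + h),
      min 1 (E (i₀-1) x / E i₀ x)) ≤ Tm := by
    intro h0
    obtain ⟨k, hk⟩ : ∃ k, i₀ = k + 1 := ⟨i₀ - 1, by omega⟩
    have hk1 : i₀ - 1 = k := by omega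
    rw [hTm, if_neg h0, hp, hk1, hk]
    simp only [ratioMinus]
    exact intExpB (ν (k+1) - ν k) σ2 ((ν k + ν (k+1))/2)
      (a + ((k+1:ℕ):ℝ)*h) (a + ((k+1:ℕ):ℝ)*h + h) (hΔpos k) hσ (by linarith)
  have cellMinusOut : ∀ k : ℕ, k + 1 = i₀ → (∫ x in Set.Ioc (a + (k:ℝ)*h) (a + (k:ℝ)*h + h),
      min 1 (E i₀ x / E k x)) ≤ Sm := by
    intro k hk
    have hrw : ∀ x : ℝ, E i₀ x / E k x
        = Real.exp ((ν (k+1) - ν k) * (x - (ν k + ν (k+1))/2) / σ2) := by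
      intro x
      rw [← hk, ratioPlus k x]
    simp only [hrw]
    have hd : a + (k:ℝ)*h + h = p := by
      rw [hp, ← hk]; push_cast; ring
    rw [hd]
    have := intExpA (ν (k+1) - ν k) σ2 ((ν k + ν (k+1))/2)
      (a + (k:ℝ)*h) p (hΔpos k) hσ (by rw [← hd]; linarith)
    have h0 : i₀ ≠ 0 := by omega
    have hk1 : i₀ - 1 = k := by omega
    rw [hSm, if_neg h0, hk1, ← hk]
    exact this
  -- master per-cell bound
  have master : ∀ i ∈ Finset.range N, (∫ x in Set.Ioc (a + (i:ℝ)*h) (a + (i:ℝ)*h + h), f x) ≤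
      (if i = i₀ then Tp + Tm + N * (h * e23) else 0) + (if i = i₀ + 1 then Sp else 0)
      + (if i + 1 = i₀ then Sm else 0) + h * e23 := by
    intro i hi
    by_cases hii : i = i₀
    · subst hii
      rw [if_pos rfl, if_neg (by omega), if_neg (by omega)]
      have hb : ∀ x ∈ Set.Ioc (a + (i:ℝ)*h) (a + (i:ℝ)*h + h),
          f x ≤ ∑ i' ∈ (Finset.range N).erase i, min 1 (E i' x / E i x) := by
        intro x hx
        have hIx : Ind x = 1 := by rw [hInd]; exact Set.indicator_of_mem hx _
        have hfx : f x = 1 - E i x / S x := by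
          rw [hf]
          simp only []
          rw [hIx, abs_sub_comm]
          exact abs_of_nonneg (by linarith [hπ1 x])
        rw [hfx]
        have hsum : E i x + ∑ i' ∈ (Finset.range N).erase i, E i' x = S x := by
          simp only [hS]
          exact Finset.add_sum_erase (Finset.range N) (fun j => E j x) hi
        have h1 : 1 - E i x / S x = (∑ i' ∈ (Finset.range N).erase i, E i' x) / S x := by
          have hrw : (∑ i' ∈ (Finset.range N).erase i, E i' x) = S x - E i x := by
            linarith [hsum]
          rw [hrw, sub_div, div_self (hSpos x).ne']
        rw [h1, Finset.sum_div]
        apply Finset.sum_le_sum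
        intro i' hi'
        refine le_min ((div_le_one (hSpos x)).2 (hES x i' (Finset.mem_of_mem_erase hi'))) ?_
        exact div_le_div_of_nonneg_left (hEpos i' x).le (hEpos i x) (hES x i hi)
      have h2 : (∫ x in Set.Ioc (a + (i:ℝ)*h) (a + (i:ℝ)*h + h), f x)
          ≤ ∫ x in Set.Ioc (a + (i:ℝ)*h) (a + (i:ℝ)*h + h),
              ∑ i' ∈ (Finset.range N).erase i, min 1 (E i' x / E i x) := by
        apply setIntegral_mono_on (hfint _ _) ?_ measurableSet_Ioc hb
        exact integrable_finset_sum _ (fun i' _ => ((hmincont i i').integrableOn_Ioc))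
      rw [integral_finset_sum _ (fun i' _ => ((hmincont i i').integrableOn_Ioc))] at h2
      have h3 : (∑ i' ∈ (Finset.range N).erase i,
            ∫ x in Set.Ioc (a + (i:ℝ)*h) (a + (i:ℝ)*h + h), min 1 (E i' x / E i x))
          ≤ ∑ i' ∈ (Finset.range N).erase i,
            ((if i' = i + 1 then Tp else 0) + (if i' + 1 = i then Tm else 0) + h * e23) := by
        apply Finset.sum_le_sum
        intro i' hi'
        have hne : i' ≠ i := Finset.ne_of_mem_erase hi'
        by_cases h1' : i' = i + 1
        · subst h1'
          rw [if_pos rfl, if_neg (by omega)]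
          have := cellPlusIn
          linarith [mul_nonneg hh.le he23pos.le, hTm0]
        · by_cases h2' : i' + 1 = i
          · rw [if_neg h1', if_pos h2']
            have hk1 : i - 1 = i' := by omega
            have hbd := cellMinusIn (by omega : i ≠ 0)
            rw [hk1] at hbd
            linarith [mul_nonneg hh.le he23pos.le, hTp0]
          · rw [if_neg h1', if_neg h2']
            have := cellFar i i' (by omega)
            linarith [hTp0, hTm0]
      have h4 : (∑ i' ∈ (Finset.range N).erase i,
            ((if i' = i + 1 then Tp else 0) + (if i' + 1 = i then Tm else 0) + h * e23))
          ≤ Tp + Tm + (N:ℝ) * (h * e23) := by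
        rw [Finset.sum_add_distrib, Finset.sum_add_distrib]
        have e1 : (∑ i' ∈ (Finset.range N).erase i, (if i' = i + 1 then Tp else 0)) ≤ Tp := by
          rw [Finset.sum_ite_eq' ((Finset.range N).erase i) (i+1) (fun _ => Tp)]
          split_ifs
          · exact le_refl Tp
          · exact hTp0
        have e2 : (∑ i' ∈ (Finset.range N).erase i, (if i' + 1 = i then Tm else 0)) ≤ Tm := by
          by_cases h0 : i = 0
          · rw [Finset.sum_eq_zero]
            · exact hTm0
            · intro i' _
              rw [if_neg (by omega)]
          · have hcongr : ∀ i' ∈ (Finset.range N).erase i,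
                (if i' + 1 = i then Tm else 0) = (if i' = i - 1 then Tm else 0) := by
              intro i' _
              by_cases hc : i' + 1 = i
              · rw [if_pos hc, if_pos (by omega)]
              · rw [if_neg hc, if_neg (by omega)]
            rw [Finset.sum_congr rfl hcongr,
              Finset.sum_ite_eq' ((Finset.range N).erase i) (i-1) (fun _ => Tm)]
            split_ifs
            · exact le_refl Tm
            · exact hTm0
        have e3 : (∑ _i' ∈ (Finset.range N).erase i, h * e23) ≤ (N:ℝ) * (h * e23) := by
          rw [Finset.sum_const, nsmul_eq_mul]
          apply mul_le_mul_of_nonneg_right _ (mul_nonneg hh.le he23pos.le)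
          have hcard : ((Finset.range N).erase i).card ≤ N := by
            rw [Finset.card_erase_of_mem hi, Finset.card_range]
            omega
          exact_mod_cast Nat.cast_le.2 hcard
        linarith
      refine ((h2.trans h3).trans h4).trans ?_
      linarith [mul_nonneg hh.le he23pos.le]
    · rw [if_neg hii]
      have hb : ∀ x ∈ Set.Ioc (a + (i:ℝ)*h) (a + (i:ℝ)*h + h), f x ≤ min 1 (E i₀ x / E i x) := by
        intro x hx
        have hIx : Ind x = 0 := by
          rw [hInd]
          apply Set.indicator_of_notMem
          intro hx'
          rcases lt_or_gt_of_ne hii with hlt | hgt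
          · have hcast : (i:ℝ) + 1 ≤ i₀ := by exact_mod_cast hlt
            have hxx1 := hx.2
            have hxx2 := hx'.1
            nlinarith [mul_le_mul_of_nonneg_right hcast hh.le]
          · have hcast : (i₀:ℝ) + 1 ≤ i := by exact_mod_cast hgt
            have hxx1 := hx.1
            have hxx2 := hx'.2
            nlinarith [mul_le_mul_of_nonneg_right hcast hh.le]
        have hfx : f x = E i₀ x / S x := by
          rw [hf]
          simp only []
          rw [hIx, sub_zero]
          exact abs_of_nonneg (hπ0 x)
        rw [hfx]
        refine le_min (hπ1 x) ?_
        exact div_le_div_of_nonneg_left (hEpos i₀ x).le (hEpos i x) (hES x i hi)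
      have h2 : (∫ x in Set.Ioc (a + (i:ℝ)*h) (a + (i:ℝ)*h + h), f x)
          ≤ ∫ x in Set.Ioc (a + (i:ℝ)*h) (a + (i:ℝ)*h + h), min 1 (E i₀ x / E i x) :=
        setIntegral_mono_on (hfint _ _) ((hmincont i i₀).integrableOn_Ioc) measurableSet_Ioc hb
      by_cases h1' : i = i₀ + 1
      · subst h1'
        rw [if_pos rfl, if_neg (by omega)]
        have hbd : (∫ x in Set.Ioc (a + ((i₀+1:ℕ):ℝ)*h) (a + ((i₀+1:ℕ):ℝ)*h + h),
            min 1 (E i₀ x / E (i₀+1) x)) ≤ Sp := cellPlusOut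
        refine (h2.trans hbd).trans ?_
        linarith [mul_nonneg hh.le he23pos.le]
      · by_cases h2' : i + 1 = i₀
        · rw [if_neg h1', if_pos h2']
          have hbd := cellMinusOut i h2'
          refine (h2.trans hbd).trans ?_
          linarith [mul_nonneg hh.le he23pos.le]
        · rw [if_neg h1', if_neg h2']
          have hbd := cellFar i i₀ (by omega)
          refine (h2.trans hbd).trans ?_
          linarith [hSp0, hSm0]
  -- splitting the integral
  have hNh : 0 ≤ (N:ℝ) * h := mul_nonneg (Nat.cast_nonneg N) hh.le
  have hsplit : (∫ x in Set.Ioc a (a + (N:ℝ) * h), f x)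
      = ∑ i ∈ Finset.range N, ∫ x in Set.Ioc (a + (i:ℝ)*h) (a + (i:ℝ)*h + h), f x := by
    have hmono : ∀ k : ℕ, a + (k:ℝ)*h ≤ a + ((k+1:ℕ):ℝ)*h := by
      intro k
      push_cast
      nlinarith [hh.le]
    have hint : ∀ k < N, IntervalIntegrable f volume (a + (k:ℝ)*h) (a + ((k+1:ℕ):ℝ)*h) := by
      intro k _
      rw [intervalIntegrable_iff, Set.uIoc_of_le (hmono k)]
      exact hfint _ _
    have hadj : (∑ k ∈ Finset.range N, ∫ x in (a + (k:ℝ)*h)..(a + ((k+1:ℕ):ℝ)*h), f x)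
        = ∫ x in (a + ((0:ℕ):ℝ)*h)..(a + (N:ℝ)*h), f x :=
      intervalIntegral.sum_integral_adjacent_intervals (μ := volume)
        (f := f) (a := fun k : ℕ => a + (k:ℝ)*h) hint
    have h0 : a + ((0:ℕ):ℝ)*h = a := by push_cast; ring
    rw [h0] at hadj
    have hab' : a ≤ a + (N:ℝ)*h := by linarith
    rw [← intervalIntegral.integral_of_le hab', ← hadj]
    apply Finset.sum_congr rfl
    intro k _
    rw [intervalIntegral.integral_of_le (hmono k)]
    have he : a + ((k+1:ℕ):ℝ)*h = a + (k:ℝ)*h + h := by push_cast; ring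
    rw [he]
  -- total bound
  have htotal : (∫ x in Set.Ioc a (a + (N:ℝ)*h), f x)
      ≤ Tp + Tm + Sp + Sm + 2*((N:ℝ) * (h * e23)) := by
    rw [hsplit]
    refine (Finset.sum_le_sum master).trans ?_
    rw [Finset.sum_add_distrib, Finset.sum_add_distrib, Finset.sum_add_distrib]
    have e1 : (∑ i ∈ Finset.range N, (if i = i₀ then Tp + Tm + ↑N * (h * e23) else 0))
        = Tp + Tm + (N:ℝ)*(h*e23) := by
      rw [Finset.sum_ite_eq' (Finset.range N) i₀ (fun _ => Tp + Tm + (N:ℝ)*(h*e23)),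
        if_pos (Finset.mem_range.2 hi₀)]
    have e2 : (∑ i ∈ Finset.range N, (if i = i₀+1 then Sp else 0)) ≤ Sp := by
      rw [Finset.sum_ite_eq' (Finset.range N) (i₀+1) (fun _ => Sp)]
      split_ifs
      · exact le_refl _
      · exact hSp0
    have e3 : (∑ i ∈ Finset.range N, (if i+1 = i₀ then Sm else 0)) ≤ Sm := by
      by_cases h0 : i₀ = 0
      · rw [Finset.sum_eq_zero]
        · exact hSm0
        · intro i _
          rw [if_neg (by omega)]
      · have hcongr : ∀ i ∈ Finset.range N,
            (if i+1 = i₀ then Sm else 0) = (if i = i₀-1 then Sm else 0) := by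
          intro i _
          by_cases hc : i+1 = i₀
          · rw [if_pos hc, if_pos (by omega)]
          · rw [if_neg hc, if_neg (by omega)]
        rw [Finset.sum_congr rfl hcongr, Finset.sum_ite_eq' (Finset.range N) (i₀-1) (fun _ => Sm)]
        split_ifs
        · exact le_refl _
        · exact hSm0
    have e4 : (∑ _i ∈ Finset.range N, h * e23) = (N:ℝ) * (h*e23) := by
      rw [Finset.sum_const, Finset.card_range, nsmul_eq_mul]
    rw [e1, e4]
    linarith
  -- bound the constants
  have hq0 := hqbd i₀
  have hpq : a + ((i₀:ℝ)+1)*h = p + h := by rw [hp]; ring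
  rw [hpq] at hq0
  have habs := abs_le.1 hq0
  have hΔi := hΔlo i₀
  have hdiv : σ2 / (ν (i₀+1) - ν i₀) ≤ 3*h/(2*(M:ℝ)) := by
    have d1 : σ2 / (ν (i₀+1) - ν i₀) ≤ σ2 / (2*h/3) :=
      div_le_div_of_nonneg_left hσ.le (by linarith) hΔi
    have d2 : σ2 / (2*h/3) ≤ 3*h/(2*(M:ℝ)) := by
      rw [div_le_div_iff₀ (by linarith) (by linarith)]
      nlinarith [hσM]
    linarith
  have hTS : Tp + Sp ≤ h/6 + 3*h/(M:ℝ) := by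
    have hlink : 2*(3*h/(2*(M:ℝ))) = 3*h/(M:ℝ) := by field_simp
    rw [hTp, hSp]
    rcases le_total 0 ((p+h) - (ν i₀ + ν (i₀+1))/2) with hs | hs
    · rw [max_eq_right hs, max_eq_left (by linarith : (ν i₀ + ν (i₀+1))/2 - (p+h) ≤ 0)]
      linarith [habs.1, hdiv, hlink]
    · rw [max_eq_left hs, max_eq_right (by linarith : (0:ℝ) ≤ (ν i₀ + ν (i₀+1))/2 - (p+h))]
      linarith [habs.2, hdiv, hlink]
  have hTSm : Tm + Sm ≤ h/6 + 3*h/(M:ℝ) := by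
    by_cases h0 : i₀ = 0
    · rw [hTm, hSm, if_pos h0, if_pos h0]
      have h1 : (0:ℝ) ≤ 3*h/(M:ℝ) := by positivity
      linarith
    · obtain ⟨k, hk⟩ : ∃ k, i₀ = k + 1 := ⟨i₀ - 1, by omega⟩
      have hk1 : i₀ - 1 = k := by omega
      have hqk := hqbd k
      have hpk : a + ((k:ℝ)+1)*h = p := by rw [hp, hk]; push_cast; ring
      rw [hpk] at hqk
      have habs2 := abs_le.1 hqk
      have hΔk := hΔlo k
      have hdivk : σ2 / (ν (k+1) - ν k) ≤ 3*h/(2*(M:ℝ)) := by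
        have d1 : σ2 / (ν (k+1) - ν k) ≤ σ2 / (2*h/3) :=
          div_le_div_of_nonneg_left hσ.le (by linarith) hΔk
        have d2 : σ2 / (2*h/3) ≤ 3*h/(2*(M:ℝ)) := by
          rw [div_le_div_iff₀ (by linarith) (by linarith)]
          nlinarith [hσM]
        linarith
      have hνrw : ν i₀ = ν (k+1) := by rw [hk]
      have hlink : 2*(3*h/(2*(M:ℝ))) = 3*h/(M:ℝ) := by field_simp
      rw [hTm, hSm, if_neg h0, if_neg h0, hk1, hνrw]
      rcases le_total 0 ((ν k + ν (k+1))/2 - p) with hs | hs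
      · rw [max_eq_right hs, max_eq_left (by linarith : p - (ν k + ν (k+1))/2 ≤ 0)]
        linarith [habs2.2, hdivk, hlink]
      · rw [max_eq_left hs, max_eq_right (by linarith : (0:ℝ) ≤ p - (ν k + ν (k+1))/2)]
        linarith [habs2.1, hdivk, hlink]
  have hfar : 2*((N:ℝ)*(h*e23)) ≤ (N:ℝ)*h*Real.exp (-(M:ℝ)/30) := by
    have h57 : (2:ℝ) ≤ Real.exp (19*(M:ℝ)/30) := by
      have := Real.add_one_le_exp (19*(M:ℝ)/30)
      linarith
    have hprod : Real.exp (19*(M:ℝ)/30) * e23 = Real.exp (-(M:ℝ)/30) := by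
      rw [he23, ← Real.exp_add]
      congr 1
      ring
    calc 2*((N:ℝ)*(h*e23)) = (N:ℝ)*h*(2*e23) := by ring
    _ ≤ (N:ℝ)*h*(Real.exp (19*(M:ℝ)/30) * e23) := by
        apply mul_le_mul_of_nonneg_left _ hNh
        exact mul_le_mul_of_nonneg_right h57 he23pos.le
    _ = (N:ℝ)*h*Real.exp (-(M:ℝ)/30) := by rw [hprod]
  have hM30 : 3*h/(M:ℝ) ≤ h/30 := by
    have h1 : 3*h/(M:ℝ) ≤ 3*h/90 := div_le_div_of_nonneg_left (by linarith) (by norm_num) hM'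
    linarith
  refine htotal.trans ?_
  linarith [hTS, hTSm, hfar, hM30]

set_option maxHeartbeats 1000000 in
theorem stmt8 :
    ∃ K₀ : ℕ, ∀ (a b : ℝ), a < b → ∀ (K K' : ℕ), 0 < K → 0 < K' → K₀ ≤ K' →
      ∀ (μ : Fin K → Fin K' → ℝ),
        (∀ j l, |μ j l - gC a b K K' j l| ≤ gL a b K / (6 * K')) →
      ∀ σ2 : ℝ, gL a b K ^ 2 / (2 * (K' : ℝ) ^ 3) ≤ σ2 →
        σ2 ≤ gL a b K ^ 2 / (K' : ℝ) ^ 3 →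
      ∀ (j : Fin K) (l : Fin K'),
        (∫ x in Set.Ioc a b,
          |gPi a b K K' μ σ2 j l x -
            Set.indicator (Set.Ioc (gA a b K K' j l) (gA a b K K' j l + gL a b K / K'))
              (fun _ => (1 : ℝ)) x|)
          ≤ 2 * gL a b K / (5 * K') + gL a b K * K * Real.exp (-(K' : ℝ) / 30)
            + gL a b K * Real.exp (-(2 * (K' : ℝ)) / 3) := by
  classical
  refine ⟨90, ?_⟩
  intro a b hab K K' hK hK' hK₀ μ hμ σ2 hσlo hσhi j l
  have hKpos : (0:ℝ) < K := by exact_mod_cast hK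
  have hK'pos : (0:ℝ) < K' := by exact_mod_cast hK'
  set L := gL a b K with hL
  have hLpos : 0 < L := div_pos (by linarith) hKpos
  set w := L / (K':ℝ) with hw
  have hwpos : 0 < w := div_pos hLpos hK'pos
  have hLw : L = (K':ℝ) * w := by rw [hw]; field_simp
  set N := K * K' with hN
  have hiKK : ∀ (t : Fin K) (s : Fin K'), (t:ℕ) * K' + (s:ℕ) < N := by
    intro t s
    have h1 : (t:ℕ) + 1 ≤ K := t.isLt
    have h2 : (s:ℕ) < K' := s.isLt
    calc (t:ℕ) * K' + (s:ℕ) < (t:ℕ) * K' + K' := by omega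
    _ = ((t:ℕ) + 1) * K' := by ring
    _ ≤ K * K' := Nat.mul_le_mul_right K' h1
  set ν : ℕ → ℝ := fun i => if hi : i < N then
      μ ⟨i / K', (Nat.div_lt_iff_lt_mul hK').2 hi⟩ ⟨i % K', Nat.mod_lt i hK'⟩
    else a + ((i:ℝ) + 1/2) * w with hνdef
  have hνval : ∀ (t : Fin K) (s : Fin K'), ν ((t:ℕ) * K' + (s:ℕ)) = μ t s := by
    intro t s
    have e1 : ((t:ℕ) * K' + (s:ℕ)) / K' = (t:ℕ) := by
      have hco : (t:ℕ)*K' + (s:ℕ) = (s:ℕ) + K'*(t:ℕ) := by ring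
      rw [hco, Nat.add_mul_div_left _ _ hK', Nat.div_eq_of_lt s.isLt, Nat.zero_add]
    have e2 : ((t:ℕ) * K' + (s:ℕ)) % K' = (s:ℕ) := by
      have hco : (t:ℕ)*K' + (s:ℕ) = (s:ℕ) + K'*(t:ℕ) := by ring
      rw [hco, Nat.add_mul_mod_self_left, Nat.mod_eq_of_lt s.isLt]
    rw [hνdef]
    simp only [dif_pos (hiKK t s), e1, e2, Fin.eta]
  have hνc : ∀ i : ℕ, |ν i - (a + ((i:ℝ) + 1/2) * w)| ≤ w / 6 := by
    intro i
    by_cases hi : i < N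
    · rw [hνdef]
      simp only [dif_pos hi]
      have hdm : K' * (i / K') + i % K' = i := Nat.div_add_mod i K'
      have hdmR : (K':ℝ) * ((i / K' : ℕ):ℝ) + ((i % K' : ℕ):ℝ) = (i:ℝ) := by
        exact_mod_cast congrArg (Nat.cast (R := ℝ)) hdm
      have hgc : gC a b K K' ⟨i / K', (Nat.div_lt_iff_lt_mul hK').2 hi⟩
          ⟨i % K', Nat.mod_lt i hK'⟩ = a + ((i:ℝ) + 1/2) * w := by
        simp only [gC, gA]
        rw [← hL, hLw]
        have hmod : ((i % K' : ℕ):ℝ) = (i:ℝ) - (K':ℝ) * ((i / K' : ℕ):ℝ) := by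
          linarith [hdmR]
        rw [hmod]
        field_simp
        ring
      have hw6 : L / (6*(K':ℝ)) = w/6 := by
        rw [hLw]
        field_simp
      rw [← hgc, ← hw6]
      exact hμ _ _
    · rw [hνdef]
      simp only [dif_neg hi]
      simp only [sub_self, abs_zero]
      linarith
  have hi₀ : (j:ℕ) * K' + (l:ℕ) < N := hiKK j l
  have hσpos : 0 < σ2 := by
    have h2 : 0 < L^2/(2*(K':ℝ)^3) := div_pos (pow_pos hLpos 2) (by positivity)
    exact lt_of_lt_of_le h2 hσlo
  have hσM : (K':ℝ) * σ2 ≤ w^2 := by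
    have h1 : (K':ℝ) * σ2 ≤ (K':ℝ) * (L^2/(K':ℝ)^3) :=
      mul_le_mul_of_nonneg_left hσhi (by positivity)
    have h2 : (K':ℝ) * (L^2/(K':ℝ)^3) = w^2 := by
      rw [hw]
      field_simp
    linarith
  have hcore := core a w σ2 K' N ((j:ℕ) * K' + (l:ℕ)) ν hwpos hσpos hσM hK₀ hi₀ hνc
  have hb : b = a + (N:ℝ) * w := by
    rw [hw, hL]
    simp only [gL, hN]
    push_cast
    field_simp
    ring
  have hgA : gA a b K K' j l = a + ((((j:ℕ)*K'+(l:ℕ)) : ℕ):ℝ) * w := by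
    simp only [gA]
    rw [← hL, hw]
    push_cast
    field_simp
    ring
  have hInteq : ∀ x : ℝ, gPi a b K K' μ σ2 j l x
      = Real.exp (-(x - ν ((j:ℕ)*K'+(l:ℕ))) ^ 2/(2*σ2)) /
        (∑ i ∈ Finset.range N, Real.exp (-(x - ν i) ^ 2/(2*σ2))) := by
    intro x
    simp only [gPi]
    rw [hνval j l]
    congr 1
    rw [← sum_grid K K' (fun n => Real.exp (-(x - ν n) ^ 2/(2*σ2)))]
    refine Finset.sum_congr rfl (fun t _ => Finset.sum_congr rfl (fun s _ => ?_))
    rw [hνval t s]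
  have hdom : Set.Ioc a b = Set.Ioc a (a + (N:ℝ)*w) := by rw [← hb]
  have heq : (∫ x in Set.Ioc a b,
      |gPi a b K K' μ σ2 j l x -
        Set.indicator (Set.Ioc (gA a b K K' j l) (gA a b K K' j l + L / K'))
          (fun _ => (1 : ℝ)) x|)
      = ∫ x in Set.Ioc a (a + (N:ℝ)*w),
        |Real.exp (-(x - ν ((j:ℕ)*K'+(l:ℕ))) ^ 2/(2*σ2)) /
            (∑ i ∈ Finset.range N, Real.exp (-(x - ν i) ^ 2/(2*σ2))) -
          Set.indicator (Set.Ioc (a + (((j:ℕ)*K'+(l:ℕ) : ℕ):ℝ) * w)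
            (a + (((j:ℕ)*K'+(l:ℕ) : ℕ):ℝ) * w + w)) (fun _ => (1 : ℝ)) x| := by
    rw [hdom]
    apply MeasureTheory.integral_congr_ae
    apply Filter.Eventually.of_forall
    intro x
    simp only []
    rw [hInteq x, hgA, ← hw]
  rw [heq]
  refine hcore.trans ?_
  have hA : 2*w/5 = 2*L/(5*(K':ℝ)) := by rw [hw]; ring
  have hB : (N:ℝ)*w = L*(K:ℝ) := by
    rw [hw, hN]
    push_cast
    field_simp
  have hC : 0 ≤ L * Real.exp (-(2 * (K':ℝ))/3) := by positivity
  have hB' : (N:ℝ)*w*Real.exp (-(K':ℝ)/30) = L*(K:ℝ)*Real.exp (-(K':ℝ)/30) := by rw [hB]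
  linarith [hB', hA, hC]
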